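/- Let g satisfy Assumption (B1) and let s > 0. Then for every q ∈ ℝ and every u ∈ prox_{sg}(q) it holds q·u ≥ 0; in particular, if q > 0 then u ≥ 0, and if u > 0 then q ≥ 0. -/
import Mathlib


/-- `u ∈ prox_{s·g}(q)`: `u` is a global minimizer of `v ↦ ½(v − q)² + s·g(v)`,
where `g : ℝ → ℝ ∪ {+∞}` is modeled as an `EReal`-valued function. -/
def IsProx (g : ℝ → EReal) (s q u : ℝ) : Prop :=
  ∀ v : ℝ, (((u - q) ^ 2 / 2 : ℝ) : EReal) + (s : EReal) * g u ≤
    (((v - q) ^ 2 / 2 : ℝ) : EReal) + (s : EReal) * g v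

/-- under Assumption (B1), any `u ∈ prox_{s g}(q)` satisfies `q·u ≥ 0`;
in particular `q > 0 → u ≥ 0` and `u > 0 → q ≥ 0`. -/
theorem prox_sign (g : ℝ → EReal)
    (hproper : ∃ x : ℝ, g x ≠ ⊤)
    (hbdd : ∃ c : ℝ, ∀ x : ℝ, (c : EReal) ≤ g x)
    (hlsc : LowerSemicontinuous g)
    (hsymm : ∀ x : ℝ, g (-x) = g x)
    (h0 : g 0 = 0)
    (s : ℝ) (hs : 0 < s) (q u : ℝ) (hu : IsProx g s q u) :
    0 ≤ q * u ∧ (0 < q → 0 ≤ u) ∧ (0 < u → 0 ≤ q) := by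
  obtain ⟨c, hc⟩ := hbdd
  have hne_top : g u ≠ ⊤ := by
    intro h
    have h1 := hu 0
    rw [h, h0] at h1
    simp only [mul_zero, add_zero] at h1
    rw [EReal.mul_top_of_pos (by exact_mod_cast hs)] at h1
    have : (((u - q) ^ 2 / 2 : ℝ) : EReal) + ⊤ = ⊤ := by
      simp [EReal.add_top_of_ne_bot]
    rw [this] at h1
    exact (EReal.coe_lt_top _).not_ge (le_trans h1 le_rfl)
  have hne_bot : g u ≠ ⊥ := fun h => by
    have := hc u; rw [h] at this; exact (EReal.bot_lt_coe c).not_ge this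
  lift g u to ℝ using ⟨hne_top, hne_bot⟩ with a ha
  have h2 := hu (-u)
  rw [hsymm u, ← ha] at h2
  have h3 : ((u - q) ^ 2 / 2 + s * a : ℝ) ≤ ((-u - q) ^ 2 / 2 + s * a : ℝ) := by
    exact_mod_cast h2
  have hqu : 0 ≤ q * u := by nlinarith
  refine ⟨hqu, fun hq => ?_, fun hup => ?_⟩
  · nlinarith
  · nlinarith
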